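/- Let φ be an LTL formula and w an infinite word satisfying φ. Let G be the set of G-subformulas Gψ of φ such that w ⊨ FGψ. Then for almost every i ∈ ℕ: the formula ⋀_{Gψ∈G}(Gψ ∧ ⋀_{j=0}^{i} afG(ψ, w[j..i])) ∧ ⋀_{Gψ∈GG(φ)\G} ¬Gψ propositionally implies af(φ, w[0..i]). -/

import Mathlib

namespace LTLF

/-- LTL formulas in negation normal form over atomic propositions `Ap`. -/
inductive LTL (Ap : Type) : Type
  | tt : LTL Ap
  | ff : LTL Ap
  | atom : Ap → LTL Ap
  | natom : Ap → LTL Ap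
  | and : LTL Ap → LTL Ap → LTL Ap
  | or : LTL Ap → LTL Ap → LTL Ap
  | next : LTL Ap → LTL Ap
  | fut : LTL Ap → LTL Ap
  | glob : LTL Ap → LTL Ap
  | untl : LTL Ap → LTL Ap → LTL Ap

variable {Ap : Type}

/-- Infinite words over the alphabet `2^Ap`. -/
abbrev Word (Ap : Type) := ℕ → Set Ap

/-- The suffix `w_k`. -/
def suffix (w : Word Ap) (k : ℕ) : Word Ap := fun i => w (i + k)

/-- Standard LTL semantics on infinite words. -/
def Sat : LTL Ap → Word Ap → Prop
  | .tt, _ => True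
  | .ff, _ => False
  | .atom a, w => a ∈ w 0
  | .natom a, w => a ∉ w 0
  | .and φ ψ, w => Sat φ w ∧ Sat ψ w
  | .or φ ψ, w => Sat φ w ∨ Sat ψ w
  | .next φ, w => Sat φ (suffix w 1)
  | .fut φ, w => ∃ k, Sat φ (suffix w k)
  | .glob φ, w => ∀ k, Sat φ (suffix w k)
  | .untl φ ψ, w => ∃ k, Sat ψ (suffix w k) ∧ ∀ j < k, Sat φ (suffix w j)

open Classical in
/-- The "after function" `af(φ, ν)`. -/
noncomputable def af : LTL Ap → Set Ap → LTL Ap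
  | .tt, _ => .tt
  | .ff, _ => .ff
  | .atom a, ν => if a ∈ ν then .tt else .ff
  | .natom a, ν => if a ∈ ν then .ff else .tt
  | .and φ ψ, ν => .and (af φ ν) (af ψ ν)
  | .or φ ψ, ν => .or (af φ ν) (af ψ ν)
  | .next φ, _ => φ
  | .fut φ, ν => .or (af φ ν) (.fut φ)
  | .glob φ, ν => .and (af φ ν) (.glob φ)
  | .untl φ ψ, ν => .or (af ψ ν) (.and (af φ ν) (.untl φ ψ))

/-- `af` extended to finite words. -/
noncomputable def afw (φ : LTL Ap) (u : List (Set Ap)) : LTL Ap := u.foldl af φ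

open Classical in
/-- The variant `afG`, identical to `af` except `afG(Gφ, ν) = Gφ`. -/
noncomputable def afG : LTL Ap → Set Ap → LTL Ap
  | .tt, _ => .tt
  | .ff, _ => .ff
  | .atom a, ν => if a ∈ ν then .tt else .ff
  | .natom a, ν => if a ∈ ν then .ff else .tt
  | .and φ ψ, ν => .and (afG φ ν) (afG ψ ν)
  | .or φ ψ, ν => .or (afG φ ν) (afG ψ ν)
  | .next φ, _ => φ
  | .fut φ, ν => .or (afG φ ν) (.fut φ)
  | .glob φ, _ => .glob φ
  | .untl φ ψ, ν => .or (afG ψ ν) (.and (afG φ ν) (.untl φ ψ))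

/-- `afG` extended to finite words. -/
noncomputable def afGw (φ : LTL Ap) (u : List (Set Ap)) : LTL Ap := u.foldl afG φ

/-- The finite infix `w[i..j] = w[i] w[i+1] ⋯ w[j]`. -/
def infixW (w : Word Ap) (i j : ℕ) : List (Set Ap) :=
  (List.range (j + 1 - i)).map (fun k => w (i + k))

/-- The finite prefix `w[0..i]`. -/
def prefixW (w : Word Ap) (i : ℕ) : List (Set Ap) := infixW w 0 i

/-- Concatenation of a finite word with an infinite word. -/
def cat (u : List (Set Ap)) (w : Word Ap) : Word Ap :=
  fun k => if h : k < u.length then u.get ⟨k, h⟩ else w (k - u.length)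

/-- Propositional evaluation of a formula under a valuation `v`, treating
literals and temporal formulas (`X`, `F`, `G`, `U`) as opaque propositional atoms. -/
def propSat (v : LTL Ap → Prop) : LTL Ap → Prop
  | .tt => True
  | .ff => False
  | .and φ ψ => propSat v φ ∧ propSat v ψ
  | .or φ ψ => propSat v φ ∨ propSat v ψ
  | φ => v φ

/-- A valuation is consistent on literals: `a` and `¬a` get complementary values. -/
def LitConsistent (v : LTL Ap → Prop) : Prop :=
  ∀ a : Ap, v (.atom a) ↔ ¬ v (.natom a)

/-- Propositional implication `φ ⊨_p ψ`. -/
def PropImp (φ ψ : LTL Ap) : Prop :=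
  ∀ v : LTL Ap → Prop, LitConsistent v → propSat v φ → propSat v ψ

/-- Propositional equivalence `φ ≡_p ψ`. -/
def PropEquiv (φ ψ : LTL Ap) : Prop :=
  ∀ v : LTL Ap → Prop, LitConsistent v → (propSat v φ ↔ propSat v ψ)

/-- `⋀_{χ ∈ H} χ ⊨_p ψ` : the (possibly infinite) conjunction of the
hypotheses `H` propositionally implies `ψ`. -/
def PropImpSet (H : Set (LTL Ap)) (ψ : LTL Ap) : Prop :=
  ∀ v : LTL Ap → Prop, LitConsistent v → (∀ χ ∈ H, propSat v χ) → propSat v ψ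

/-- The list of subformulas of a formula. -/
def subfs : LTL Ap → List (LTL Ap)
  | .tt => [.tt]
  | .ff => [.ff]
  | .atom a => [.atom a]
  | .natom a => [.natom a]
  | .and φ ψ => .and φ ψ :: (subfs φ ++ subfs ψ)
  | .or φ ψ => .or φ ψ :: (subfs φ ++ subfs ψ)
  | .next φ => .next φ :: subfs φ
  | .fut φ => .fut φ :: subfs φ
  | .glob φ => .glob φ :: subfs φ
  | .untl φ ψ => .untl φ ψ :: (subfs φ ++ subfs ψ)

/-- `Gψ` is a `G`-subformula of `φ`. -/
def GSub (φ ψ : LTL Ap) : Prop := LTL.glob ψ ∈ subfs φ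

/-- A formula is `G`-free if it contains no occurrence of `G`. -/
def GFree : LTL Ap → Prop
  | .glob _ => False
  | .and φ ψ => GFree φ ∧ GFree ψ
  | .or φ ψ => GFree φ ∧ GFree ψ
  | .next φ => GFree φ
  | .fut φ => GFree φ
  | .untl φ ψ => GFree φ ∧ GFree ψ
  | _ => True

/-- `ind(w, ψ)`: the least index `j` with `w_j ⊨ Gψ`. -/
noncomputable def ind (w : Word Ap) (ψ : LTL Ap) : ℕ :=
  sInf {j | Sat (.glob ψ) (suffix w j)}
section Aux
variable {v : LTL Ap → Prop} {w : Word Ap}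

@[simp] lemma afw_nil (φ : LTL Ap) : afw φ [] = φ := rfl
@[simp] lemma afw_cons (φ : LTL Ap) (ν : Set Ap) (u : List (Set Ap)) :
    afw φ (ν :: u) = afw (af φ ν) u := rfl
@[simp] lemma afGw_nil (φ : LTL Ap) : afGw φ [] = φ := rfl
@[simp] lemma afGw_cons (φ : LTL Ap) (ν : Set Ap) (u : List (Set Ap)) :
    afGw φ (ν :: u) = afGw (afG φ ν) u := rfl

lemma afw_and (a b : LTL Ap) (u : List (Set Ap)) :
    afw (.and a b) u = .and (afw a u) (afw b u) := by
  induction u generalizing a b with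
  | nil => rfl
  | cons ν u ih => simp [af, ih]

lemma afw_or (a b : LTL Ap) (u : List (Set Ap)) :
    afw (.or a b) u = .or (afw a u) (afw b u) := by
  induction u generalizing a b with
  | nil => rfl
  | cons ν u ih => simp [af, ih]

lemma afGw_and (a b : LTL Ap) (u : List (Set Ap)) :
    afGw (.and a b) u = .and (afGw a u) (afGw b u) := by
  induction u generalizing a b with
  | nil => rfl
  | cons ν u ih => simp [afG, ih]

lemma afGw_or (a b : LTL Ap) (u : List (Set Ap)) :
    afGw (.or a b) u = .or (afGw a u) (afGw b u) := by
  induction u generalizing a b with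
  | nil => rfl
  | cons ν u ih => simp [afG, ih]

@[simp] lemma afGw_glob (a : LTL Ap) (u : List (Set Ap)) : afGw (.glob a) u = .glob a := by
  induction u with
  | nil => rfl
  | cons ν u ih => simp [afG, ih]

@[simp] lemma afw_tt (u : List (Set Ap)) : afw (.tt : LTL Ap) u = .tt := by
  induction u with
  | nil => rfl
  | cons ν u ih => simp [af, ih]

example (χ : LTL Ap) : propSat v (.glob χ) = v (.glob χ) := rfl
example (a b : LTL Ap) : propSat v (.and a b) ↔ propSat v a ∧ propSat v b := Iff.rfl
example (a b : LTL Ap) : propSat v (.or a b) ↔ propSat v a ∨ propSat v b := Iff.rfl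
example : propSat v (.tt : LTL Ap) := trivial
end Aux
section Aux2
variable {v : LTL Ap → Prop} {w : Word Ap}

lemma GSub_self_glob (a : LTL Ap) : GSub (.glob a) a := List.mem_cons_self

lemma GSub_and_l {a b χ : LTL Ap} (h : GSub a χ) : GSub (.and a b) χ := by
  simp only [GSub, subfs, List.mem_cons, List.mem_append]; tauto
lemma GSub_and_r {a b χ : LTL Ap} (h : GSub b χ) : GSub (.and a b) χ := by
  simp only [GSub, subfs, List.mem_cons, List.mem_append]; tauto
lemma GSub_or_l {a b χ : LTL Ap} (h : GSub a χ) : GSub (.or a b) χ := by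
  simp only [GSub, subfs, List.mem_cons, List.mem_append]; tauto
lemma GSub_or_r {a b χ : LTL Ap} (h : GSub b χ) : GSub (.or a b) χ := by
  simp only [GSub, subfs, List.mem_cons, List.mem_append]; tauto
lemma GSub_next {a χ : LTL Ap} (h : GSub a χ) : GSub (.next a) χ := by
  simp only [GSub, subfs, List.mem_cons]; tauto
lemma GSub_fut {a χ : LTL Ap} (h : GSub a χ) : GSub (.fut a) χ := by
  simp only [GSub, subfs, List.mem_cons]; tauto
lemma GSub_glob {a χ : LTL Ap} (h : GSub a χ) : GSub (.glob a) χ := by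
  simp only [GSub, subfs, List.mem_cons]; tauto
lemma GSub_untl_l {a b χ : LTL Ap} (h : GSub a χ) : GSub (.untl a b) χ := by
  simp only [GSub, subfs, List.mem_cons, List.mem_append]; tauto
lemma GSub_untl_r {a b χ : LTL Ap} (h : GSub b χ) : GSub (.untl a b) χ := by
  simp only [GSub, subfs, List.mem_cons, List.mem_append]; tauto

lemma GSub_af {φ : LTL Ap} {ν : Set Ap} {χ : LTL Ap} (h : GSub (af φ ν) χ) : GSub φ χ := by
  induction φ with
  | tt => exact h
  | ff => exact h
  | atom a =>
    simp only [af] at h; split at h <;> simp [GSub, subfs] at h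
  | natom a =>
    simp only [af] at h; split at h <;> simp [GSub, subfs] at h
  | and a b iha ihb =>
    simp only [af, GSub, subfs, List.mem_cons, List.mem_append] at h ⊢
    rcases h with h | h | h
    · exact absurd h (by simp)
    · exact Or.inr (Or.inl (iha h))
    · exact Or.inr (Or.inr (ihb h))
  | or a b iha ihb =>
    simp only [af, GSub, subfs, List.mem_cons, List.mem_append] at h ⊢
    rcases h with h | h | h
    · exact absurd h (by simp)
    · exact Or.inr (Or.inl (iha h))
    · exact Or.inr (Or.inr (ihb h))
  | next a iha =>
    simp only [af] at h
    exact GSub_next h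
  | fut a iha =>
    simp only [af, GSub, subfs, List.mem_cons, List.mem_append] at h ⊢
    rcases h with h | h | h | h
    · exact absurd h (by simp)
    · exact Or.inr (iha h)
    · exact absurd h (by simp)
    · exact Or.inr h
  | glob a iha =>
    simp only [af, GSub, subfs, List.mem_cons, List.mem_append] at h ⊢
    rcases h with h | h | h | h
    · exact absurd h (by simp)
    · exact Or.inr (iha h)
    · simp [h]
    · exact Or.inr h
  | untl a b iha ihb =>
    simp only [af, GSub, subfs, List.mem_cons, List.mem_append] at h ⊢
    rcases h with h | h | h | h | h | h
    · exact absurd h (by simp)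
    · exact Or.inr (Or.inr (ihb h))
    · exact absurd h (by simp)
    · exact Or.inr (Or.inl (iha h))
    · simp [h]
    · tauto

@[simp] lemma suffix_suffix (w : Word Ap) (k m : ℕ) :
    suffix (suffix w k) m = suffix w (m + k) :=
  funext fun i => by simp [suffix, Nat.add_assoc]

lemma sat_futglob_suffix (γ : LTL Ap) (w : Word Ap) (k : ℕ) :
    Sat (.fut (.glob γ)) (suffix w k) ↔ Sat (.fut (.glob γ)) w := by
  constructor
  · rintro ⟨m, hm⟩
    rw [suffix_suffix] at hm
    exact ⟨m + k, hm⟩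
  · rintro ⟨m, hm⟩
    refine ⟨m, ?_⟩
    rw [suffix_suffix]
    intro l
    have := hm (l + k)
    rw [suffix_suffix] at this ⊢
    have e : l + k + m = l + (m + k) := by omega
    rwa [e] at this

lemma infixW_nil {i j : ℕ} (h : i < j) : infixW w j i = [] := by
  simp [infixW, show i + 1 - j = 0 by omega]

lemma infixW_cons {i j : ℕ} (h : j ≤ i) : infixW w j i = w j :: infixW w (j + 1) i := by
  unfold infixW
  rw [show i + 1 - j = (i - j) + 1 by omega, List.range_succ_eq_map, List.map_cons,
    List.map_map, show i + 1 - (j + 1) = i - j by omega]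
  refine congrArg₂ _ (by simp) (List.map_congr_left fun x _ => ?_)
  show w (j + (x + 1)) = w (j + 1 + x)
  exact congrArg w (by omega)

lemma infixW_suffix (k j i : ℕ) : infixW (suffix w k) j i = infixW w (j + k) (i + k) := by
  unfold infixW
  rw [show i + k + 1 - (j + k) = i + 1 - j by omega]
  refine List.map_congr_left fun x _ => ?_
  show suffix w k (j + x) = w (j + k + x)
  show w (j + x + k) = w (j + k + x)
  exact congrArg w (by omega)

end Aux2
section Aux3
variable {v : LTL Ap → Prop} {w : Word Ap}

@[simp] lemma propSat_and (a b : LTL Ap) : propSat v (.and a b) ↔ propSat v a ∧ propSat v b := Iff.rfl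
@[simp] lemma propSat_or (a b : LTL Ap) : propSat v (.or a b) ↔ propSat v a ∨ propSat v b := Iff.rfl
@[simp] lemma propSat_tt : propSat v (.tt : LTL Ap) ↔ True := Iff.rfl

lemma lemD (ν : Set Ap) (u : List (Set Ap)) :
    ∀ φ : LTL Ap,
      (∀ χ, GSub φ χ → v (.glob χ) → propSat v (afGw (afG χ ν) u)) →
      propSat v (afGw (afG φ ν) u) → propSat v (afGw (af φ ν) u) := by
  intro φ
  induction φ with
  | tt => exact fun _ h => h
  | ff => exact fun _ h => h
  | atom a => exact fun _ h => h
  | natom a => exact fun _ h => h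
  | and a b iha ihb =>
    intro H h
    simp only [af, afG, afGw_and, propSat_and] at h ⊢
    exact ⟨iha (fun χ hχ => H χ (GSub_and_l hχ)) h.1,
           ihb (fun χ hχ => H χ (GSub_and_r hχ)) h.2⟩
  | or a b iha ihb =>
    intro H h
    simp only [af, afG, afGw_or, propSat_or] at h ⊢
    rcases h with h | h
    · exact Or.inl (iha (fun χ hχ => H χ (GSub_or_l hχ)) h)
    · exact Or.inr (ihb (fun χ hχ => H χ (GSub_or_r hχ)) h)
  | next a _ => exact fun _ h => h
  | fut a iha =>
    intro H h
    simp only [af, afG, afGw_or, propSat_or] at h ⊢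
    rcases h with h | h
    · exact Or.inl (iha (fun χ hχ => H χ (GSub_fut hχ)) h)
    · exact Or.inr h
  | glob a iha =>
    intro H h
    simp only [afG, afGw_glob] at h
    simp only [af, afGw_and, afGw_glob, propSat_and]
    exact ⟨iha (fun χ hχ => H χ (GSub_glob hχ)) (H a (GSub_self_glob a) h), h⟩
  | untl a b iha ihb =>
    intro H h
    simp only [af, afG, afGw_or, afGw_and, propSat_or, propSat_and] at h ⊢
    rcases h with h | ⟨h1, h2⟩
    · exact Or.inl (ihb (fun χ hχ => H χ (GSub_untl_r hχ)) h)
    · exact Or.inr ⟨iha (fun χ hχ => H χ (GSub_untl_l hχ)) h1, h2⟩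

lemma lemB {i : ℕ} :
    ∀ (d j : ℕ) (φ : LTL Ap), i + 1 ≤ j + d →
      (∀ χ, GSub φ χ → v (.glob χ) → ∀ l, j ≤ l → l ≤ i → propSat v (afGw χ (infixW w l i))) →
      propSat v (afGw φ (infixW w j i)) → propSat v (afw φ (infixW w j i)) := by
  intro d
  induction d with
  | zero =>
    intro j φ hd _ h
    rw [infixW_nil (by omega)] at h ⊢
    exact h
  | succ d ih =>
    intro j φ hd H h
    by_cases hj : j ≤ i
    · rw [infixW_cons hj] at h ⊢
      rw [afGw_cons] at h
      rw [afw_cons]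
      have hD : propSat v (afGw (af φ (w j)) (infixW w (j + 1) i)) := by
        refine lemD _ _ φ (fun χ hχ hvχ => ?_) h
        have := H χ hχ hvχ j le_rfl hj
        rwa [infixW_cons hj, afGw_cons] at this
      exact ih (j + 1) (af φ (w j)) (by omega)
        (fun χ hχ hvχ l hl1 hl2 => H χ (GSub_af hχ) hvχ l (by omega) hl2) hD
    · rw [infixW_nil (by omega)] at h ⊢
      exact h

lemma lemF {i k : ℕ} {α : LTL Ap} (hk : k ≤ i)
    (hα : propSat v (afw α (infixW w k i))) :
    ∀ (d j : ℕ), k ≤ j + d → j ≤ k → propSat v (afw (.fut α) (infixW w j i)) := by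
  intro d
  induction d with
  | zero =>
    intro j h1 h2
    have : j = k := by omega
    subst this
    rw [infixW_cons (by omega), afw_cons]
    simp only [af, afw_or, propSat_or]
    exact Or.inl (by rw [infixW_cons (by omega), afw_cons] at hα; exact hα)
  | succ d ih =>
    intro j h1 h2
    rcases eq_or_lt_of_le h2 with rfl | hlt
    · rw [infixW_cons (by omega), afw_cons]
      simp only [af, afw_or, propSat_or]
      exact Or.inl (by rw [infixW_cons (by omega), afw_cons] at hα; exact hα)
    · rw [infixW_cons (by omega), afw_cons]
      simp only [af, afw_or, propSat_or]
      exact Or.inr (ih (j + 1) (by omega) (by omega))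

lemma lemG {i k : ℕ} {α β : LTL Ap} (hk : k ≤ i)
    (hβ : propSat v (afw β (infixW w k i)))
    (hα : ∀ l, l < k → propSat v (afw α (infixW w l i))) :
    ∀ (d j : ℕ), k ≤ j + d → j ≤ k → propSat v (afw (.untl α β) (infixW w j i)) := by
  intro d
  induction d with
  | zero =>
    intro j h1 h2
    have : j = k := by omega
    subst this
    rw [infixW_cons (by omega), afw_cons]
    simp only [af, afw_or, afw_and, propSat_or, propSat_and]
    exact Or.inl (by rw [infixW_cons hk, afw_cons] at hβ; exact hβ)
  | succ d ih =>
    intro j h1 h2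
    rcases eq_or_lt_of_le h2 with rfl | hlt
    · rw [infixW_cons (by omega), afw_cons]
      simp only [af, afw_or, afw_and, propSat_or, propSat_and]
      exact Or.inl (by rw [infixW_cons hk, afw_cons] at hβ; exact hβ)
    · rw [infixW_cons (by omega), afw_cons]
      simp only [af, afw_or, afw_and, propSat_or, propSat_and]
      refine Or.inr ⟨?_, ih (j + 1) (by omega) (by omega)⟩
      have := hα j hlt
      rwa [infixW_cons (by omega), afw_cons] at this

lemma lemH {i : ℕ} {α : LTL Ap} (hG : propSat v (LTL.glob α))
    (hall : ∀ l, l ≤ i → propSat v (afw α (infixW w l i))) :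
    ∀ (d j : ℕ), i + 1 ≤ j + d → propSat v (afw (.glob α) (infixW w j i)) := by
  intro d
  induction d with
  | zero =>
    intro j h
    rw [infixW_nil (by omega)]
    exact hG
  | succ d ih =>
    intro j h
    by_cases hj : j ≤ i
    · rw [infixW_cons hj, afw_cons]
      simp only [af, afw_and, propSat_and]
      refine ⟨?_, ih (j + 1) (by omega)⟩
      have := hall j hj
      rwa [infixW_cons hj, afw_cons] at this
    · rw [infixW_nil (by omega)]
      exact hG

lemma hyps_shift {i k : ℕ} (hk : k ≤ i) {φ α : LTL Ap}
    (hsub : ∀ ψ, GSub α ψ → GSub φ ψ)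
    (hpos : ∀ ψ : LTL Ap, GSub φ ψ → Sat (LTL.fut (LTL.glob ψ)) w →
      propSat v (LTL.glob ψ) ∧ ∀ j ≤ i, propSat v (afGw ψ (infixW w j i)))
    (hneg : ∀ ψ : LTL Ap, GSub φ ψ → ¬ Sat (LTL.fut (LTL.glob ψ)) w →
      ¬ propSat v (LTL.glob ψ)) :
    (∀ ψ : LTL Ap, GSub α ψ → Sat (LTL.fut (LTL.glob ψ)) (suffix w k) →
      propSat v (LTL.glob ψ) ∧
        ∀ j ≤ i - k, propSat v (afGw ψ (infixW (suffix w k) j (i - k)))) ∧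
    (∀ ψ : LTL Ap, GSub α ψ → ¬ Sat (LTL.fut (LTL.glob ψ)) (suffix w k) →
      ¬ propSat v (LTL.glob ψ)) := by
  constructor
  · intro ψ hψ hsat
    obtain ⟨h1, h2⟩ := hpos ψ (hsub ψ hψ) ((sat_futglob_suffix ψ w k).mp hsat)
    refine ⟨h1, fun j hj => ?_⟩
    rw [infixW_suffix, show i - k + k = i by omega]
    exact h2 (j + k) (by omega)
  · intro ψ hψ hsat
    exact hneg ψ (hsub ψ hψ) fun hc => hsat ((sat_futglob_suffix ψ w k).mpr hc)

end Aux3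
/-- if `w ⊨ φ` then for almost every `i`, the conjunction of
`Gψ ∧ ⋀_{j=0}^i afG(ψ, w[j..i])` over `Gψ ∈ G` and of the atoms `¬Gψ` for
`Gψ ∈ GG(φ)\G` (encoded by forcing `v(Gψ)` false) propositionally implies
`af(φ, w[0..i])`, where `G = {Gψ ∈ GG(φ) | w ⊨ FGψ}`. -/
theorem master_implication_eventually {Ap : Type} (φ : LTL Ap) (w : Word Ap)
    (hw : Sat φ w) :
    ∃ N : ℕ, ∀ i ≥ N, ∀ v : LTL Ap → Prop, LitConsistent v →
      (∀ ψ : LTL Ap, GSub φ ψ → Sat (LTL.fut (LTL.glob ψ)) w →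
        propSat v (LTL.glob ψ) ∧ ∀ j ≤ i, propSat v (afGw ψ (infixW w j i))) →
      (∀ ψ : LTL Ap, GSub φ ψ → ¬ Sat (LTL.fut (LTL.glob ψ)) w →
        ¬ propSat v (LTL.glob ψ)) →
      propSat v (afw φ (prefixW w i)) := by
  induction φ generalizing w with
  | tt =>
    refine ⟨0, fun i _ v _ _ _ => ?_⟩
    simp
  | ff => exact hw.elim
  | atom a =>
    refine ⟨0, fun i _ v _ _ _ => ?_⟩
    show propSat v (afw (.atom a) (infixW w 0 i))
    rw [infixW_cons (Nat.zero_le i), afw_cons]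
    have hw' : a ∈ w 0 := hw
    simp [af, hw']
  | natom a =>
    refine ⟨0, fun i _ v _ _ _ => ?_⟩
    show propSat v (afw (.natom a) (infixW w 0 i))
    rw [infixW_cons (Nat.zero_le i), afw_cons]
    have hw' : a ∉ w 0 := hw
    simp [af, hw']
  | and a b iha ihb =>
    obtain ⟨ha, hb⟩ := hw
    obtain ⟨N1, h1⟩ := iha w ha
    obtain ⟨N2, h2⟩ := ihb w hb
    refine ⟨max N1 N2, fun i hi v hv hpos hneg => ?_⟩
    rw [afw_and]
    exact ⟨h1 i (le_trans (le_max_left _ _) hi) v hv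
        (fun ψ h hs => hpos ψ (GSub_and_l h) hs) (fun ψ h hs => hneg ψ (GSub_and_l h) hs),
      h2 i (le_trans (le_max_right _ _) hi) v hv
        (fun ψ h hs => hpos ψ (GSub_and_r h) hs) (fun ψ h hs => hneg ψ (GSub_and_r h) hs)⟩
  | or a b iha ihb =>
    rcases (hw : Sat a w ∨ Sat b w) with ha | hb
    · obtain ⟨N1, h1⟩ := iha w ha
      refine ⟨N1, fun i hi v hv hpos hneg => ?_⟩
      rw [afw_or]
      exact Or.inl (h1 i hi v hv
        (fun ψ h hs => hpos ψ (GSub_or_l h) hs) (fun ψ h hs => hneg ψ (GSub_or_l h) hs))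
    · obtain ⟨N2, h2⟩ := ihb w hb
      refine ⟨N2, fun i hi v hv hpos hneg => ?_⟩
      rw [afw_or]
      exact Or.inr (h2 i hi v hv
        (fun ψ h hs => hpos ψ (GSub_or_r h) hs) (fun ψ h hs => hneg ψ (GSub_or_r h) hs))
  | next a iha =>
    obtain ⟨N, hN⟩ := iha (suffix w 1) hw
    refine ⟨N + 1, fun i hi v hv hpos hneg => ?_⟩
    have h1i : (1 : ℕ) ≤ i := by omega
    obtain ⟨hp, hn⟩ := hyps_shift h1i (fun ψ h => GSub_next h) hpos hneg
    have h1 := hN (i - 1) (by omega) v hv hp hn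
    show propSat v (afw (.next a) (infixW w 0 i))
    rw [infixW_cons (Nat.zero_le i), afw_cons]
    have e : prefixW (suffix w 1) (i - 1) = infixW w (0 + 1) i := by
      unfold prefixW
      rw [infixW_suffix, show i - 1 + 1 = i from by omega]
    rw [e] at h1
    exact h1
  | fut a iha =>
    obtain ⟨k, hk⟩ := (hw : ∃ k, Sat a (suffix w k))
    obtain ⟨N, hN⟩ := iha (suffix w k) hk
    refine ⟨N + k, fun i hi v hv hpos hneg => ?_⟩
    have hki : k ≤ i := by omega
    obtain ⟨hp, hn⟩ := hyps_shift hki (fun ψ h => GSub_fut h) hpos hneg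
    have h1 := hN (i - k) (by omega) v hv hp hn
    have e : prefixW (suffix w k) (i - k) = infixW w k i := by
      unfold prefixW
      rw [infixW_suffix, show i - k + k = i from by omega, Nat.zero_add]
    rw [e] at h1
    exact lemF hki h1 k 0 (by omega) (Nat.zero_le k)
  | glob a iha =>
    refine ⟨0, fun i _ v hv hpos hneg => ?_⟩
    have hFG : Sat (.fut (.glob a)) w := by
      refine ⟨0, fun m => ?_⟩
      rw [suffix_suffix]
      exact hw (m + 0)
    obtain ⟨hvG, hafG⟩ := hpos a (GSub_self_glob a) hFG
    have hall : ∀ l, l ≤ i → propSat v (afw a (infixW w l i)) := by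
      intro l hl
      refine lemB (i + 1 - l) l a (by omega) (fun χ hχ hvχ l' _ hl2 => ?_) (hafG l hl)
      by_cases hFGχ : Sat (.fut (.glob χ)) w
      · exact (hpos χ (GSub_glob hχ) hFGχ).2 l' hl2
      · exact absurd hvχ (hneg χ (GSub_glob hχ) hFGχ)
    exact lemH hvG hall (i + 1) 0 (by omega)
  | untl a b iha ihb =>
    obtain ⟨k, hkb, hka⟩ := (hw : ∃ k, Sat b (suffix w k) ∧ ∀ j < k, Sat a (suffix w j))
    obtain ⟨Nb, hNb⟩ := ihb (suffix w k) hkb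
    have hc : ∀ l : ℕ, ∃ N : ℕ, l < k →
        ∀ i ≥ N, ∀ v : LTL Ap → Prop, LitConsistent v →
          (∀ ψ : LTL Ap, GSub a ψ → Sat (LTL.fut (LTL.glob ψ)) (suffix w l) →
            propSat v (LTL.glob ψ) ∧
              ∀ j ≤ i, propSat v (afGw ψ (infixW (suffix w l) j i))) →
          (∀ ψ : LTL Ap, GSub a ψ → ¬ Sat (LTL.fut (LTL.glob ψ)) (suffix w l) →
            ¬ propSat v (LTL.glob ψ)) →
          propSat v (afw a (prefixW (suffix w l) i)) := by
      intro l
      by_cases hl : l < k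
      · obtain ⟨N, hN⟩ := iha (suffix w l) (hka l hl)
        exact ⟨N, fun _ => hN⟩
      · exact ⟨0, fun h => absurd h hl⟩
    choose f hf using hc
    refine ⟨Nb + k + (Finset.range k).sup f, fun i hi v hv hpos hneg => ?_⟩
    have hki : k ≤ i := by omega
    obtain ⟨hpb, hnb⟩ := hyps_shift hki (fun ψ h => GSub_untl_r h) hpos hneg
    have hb' := hNb (i - k) (by omega) v hv hpb hnb
    rw [show prefixW (suffix w k) (i - k) = infixW w k i from by
      unfold prefixW
      rw [infixW_suffix, show i - k + k = i from by omega, Nat.zero_add]] at hb'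
    have ha' : ∀ l, l < k → propSat v (afw a (infixW w l i)) := by
      intro l hl
      have hli : l ≤ i := by omega
      obtain ⟨hpa, hna⟩ := hyps_shift hli (fun ψ h => GSub_untl_l h) hpos hneg
      have hsup : f l ≤ (Finset.range k).sup f := Finset.le_sup (Finset.mem_range.mpr hl)
      have := hf l hl (i - l) (by omega) v hv hpa hna
      rwa [show prefixW (suffix w l) (i - l) = infixW w l i from by
        unfold prefixW
        rw [infixW_suffix, show i - l + l = i from by omega, Nat.zero_add]] at this
    exact lemG hki hb' ha' k 0 (by omega) (Nat.zero_le k)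

end LTLF
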